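/- Assume the fourth-moment asymptotic for ζ: there are κ ∈ (0,1), a real polynomial P of degree 4, and C₀ > 0 such that |(1/T)·∫_0^T |ζ(1/2+iu)|⁴ du − P(log T)| ≤ C₀·T^{−κ} for all T ≥ 2. Then there is a constant C > 0 (depending only on κ, P, C₀) such that for all t ≥ 10 and all real A with 1 ≤ A ≤ t: ∫_A^{2A} |ζ(1/2+i(2t−r))|²·|ζ(1/2+ir)|² dr ≤ C·(log t)⁴·(A + t^{(1−κ)/2}·A^{1/2}). -/

import Mathlib

open MeasureTheory intervalIntegral

-- continuity of the integrand
lemma zeta_line_cont : Continuous (fun u : ℝ => ‖riemannZeta (1/2 + Complex.I * u)‖) := by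
  apply continuous_iff_continuousAt.mpr
  intro u
  have hne : (1/2 : ℂ) + Complex.I * u ≠ 1 := by
    intro h
    have := congrArg Complex.re h
    simp [Complex.add_re, Complex.mul_re, Complex.I_re, Complex.I_im] at this
  have h1 : ContinuousAt (fun u : ℝ => (1/2 : ℂ) + Complex.I * u) u := by
    fun_prop
  have h2 : ContinuousAt (riemannZeta ∘ (fun u : ℝ => (1/2:ℂ) + Complex.I * u)) u :=
    ContinuousAt.comp (differentiableAt_riemannZeta hne).continuousAt h1
  exact h2.norm

lemma sqrt_add_le' (x y : ℝ) (hx : 0 ≤ x) (hy : 0 ≤ y) :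
    Real.sqrt (x + y) ≤ Real.sqrt x + Real.sqrt y := by
  have h1 := Real.sq_sqrt hx
  have h2 := Real.sq_sqrt hy
  have h3 := Real.sqrt_nonneg x
  have h4 := Real.sqrt_nonneg y
  have : x + y ≤ (Real.sqrt x + Real.sqrt y) ^ 2 := by nlinarith [mul_nonneg h3 h4]
  calc Real.sqrt (x + y) ≤ Real.sqrt ((Real.sqrt x + Real.sqrt y) ^ 2) := Real.sqrt_le_sqrt this
    _ = Real.sqrt x + Real.sqrt y := Real.sqrt_sq (by positivity)

lemma poly_bound (p : Polynomial ℝ) (n : ℕ) (hn : p.natDegree ≤ n) (y : ℝ) :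
    |p.eval y| ≤ (∑ i ∈ Finset.range (n+1), |p.coeff i|) * (1 + |y|) ^ n := by
  rw [Polynomial.eval_eq_sum_range' (lt_of_le_of_lt hn (Nat.lt_succ_self n))]
  calc |∑ i ∈ Finset.range (n+1), p.coeff i * y ^ i|
      ≤ ∑ i ∈ Finset.range (n+1), |p.coeff i * y ^ i| := Finset.abs_sum_le_sum_abs _ _
    _ ≤ ∑ i ∈ Finset.range (n+1), |p.coeff i| * (1 + |y|) ^ n := by
        apply Finset.sum_le_sum
        intro i hi
        rw [abs_mul]
        apply mul_le_mul_of_nonneg_left _ (abs_nonneg _)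
        rw [abs_pow]
        calc |y| ^ i ≤ (1 + |y|) ^ i := by
              apply pow_le_pow_left₀ (abs_nonneg _); linarith [abs_nonneg y]
          _ ≤ (1 + |y|) ^ n := by
              apply pow_le_pow_right₀ (by linarith [abs_nonneg y])
              exact Nat.lt_succ_iff.mp (Finset.mem_range.mp hi)
    _ = (∑ i ∈ Finset.range (n+1), |p.coeff i|) * (1 + |y|) ^ n := by
        rw [Finset.sum_mul]

set_option maxHeartbeats 2000000 in
lemma key_moment (κ : ℝ) (hκ : κ ∈ Set.Ioo (0:ℝ) 1) (P : Polynomial ℝ) (hP : P.degree = 4)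
    (C₀ : ℝ) (hC₀ : 0 < C₀)
    (hmom : ∀ T : ℝ, 2 ≤ T →
      |(1 / T) * (∫ u in (0:ℝ)..T, ‖riemannZeta (1/2 + Complex.I * u)‖ ^ 4) -
          P.eval (Real.log T)| ≤ C₀ * T ^ (-κ))
    (t : ℝ) (ht : 10 ≤ t) (a b : ℝ) (ha : 0 ≤ a) (hab : a ≤ b) (hb2 : 2 ≤ b) (hbt : b ≤ 2*t) :
    (∫ u in a..b, ‖riemannZeta (1/2 + Complex.I * u)‖ ^ 4) ≤
      (200 * ((∑ i ∈ Finset.range 5, |P.coeff i|) +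
        (∑ i ∈ Finset.range 5, |P.derivative.coeff i|) + C₀ + 1)) * (Real.log t) ^ 4 *
        ((b - a) + b ^ (1 - κ)) := by
  obtain ⟨hκ0, hκ1⟩ := hκ
  set c := ∑ i ∈ Finset.range 5, |P.coeff i| with hc_def
  set c' := ∑ i ∈ Finset.range 5, |P.derivative.coeff i| with hc'_def
  have hc : 0 ≤ c := Finset.sum_nonneg fun i _ => abs_nonneg _
  have hc' : 0 ≤ c' := Finset.sum_nonneg fun i _ => abs_nonneg _
  set L := Real.log t with hL_def
  have hL1 : 1 ≤ L := by
    rw [hL_def, Real.le_log_iff_exp_le (by linarith)]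
    have := Real.exp_one_lt_d9
    linarith
  have hL4 : 1 ≤ L ^ 4 := one_le_pow₀ hL1
  have hPdeg : P.natDegree ≤ 4 := le_of_eq (Polynomial.natDegree_eq_of_degree_eq_some hP)
  have hP'deg : P.derivative.natDegree ≤ 4 :=
    le_trans (Polynomial.natDegree_derivative_le P) (by omega)
  -- logs on [2, 2t]
  have hlogb : ∀ x : ℝ, 2 ≤ x → x ≤ 2*t → (1 + |Real.log x|) ^ 4 ≤ 81 * L ^ 4 := by
    intro x hx hx2
    have hx0 : (0:ℝ) < x := by linarith
    have h1 : |Real.log x| = Real.log x := abs_of_nonneg (Real.log_nonneg (by linarith))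
    have h2 : Real.log x ≤ Real.log (2*t) := Real.log_le_log hx0 hx2
    have h3 : Real.log (2*t) = Real.log 2 + Real.log t := by
      rw [Real.log_mul (by norm_num) (by linarith)]
    have h4 : Real.log 2 ≤ 1 := by have := Real.log_two_lt_d9; linarith
    have h5 : 1 + |Real.log x| ≤ 3 * L := by
      rw [h1]; rw [h3] at h2; linarith
    calc (1 + |Real.log x|) ^ 4 ≤ (3*L) ^ 4 := by
          apply pow_le_pow_left₀ (by positivity) h5
      _ = 81 * L ^ 4 := by ring
  -- derivative of g
  set g : ℝ → ℝ := fun x => x * P.eval (Real.log x) with hg_def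
  set D := 81 * (c + c') * L ^ 4 with hD_def
  have hD0 : 0 ≤ D := by positivity
  have hmvt : ∀ x ∈ Set.Icc (2:ℝ) (2*t), ∀ y ∈ Set.Icc (2:ℝ) (2*t),
      ‖g y - g x‖ ≤ D * ‖y - x‖ := by
    intro x hx y hy
    apply Convex.norm_image_sub_le_of_norm_hasDerivWithin_le
      (f' := fun x => P.eval (Real.log x) + P.derivative.eval (Real.log x))
      _ _ (convex_Icc _ _) hx hy
    · intro z hz
      have hz0 : (0:ℝ) < z := lt_of_lt_of_le (by norm_num) hz.1
      have h1 : HasDerivAt (fun y : ℝ => P.eval y) (P.derivative.eval (Real.log z))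
          (Real.log z) := P.hasDerivAt _
      have h2 : HasDerivAt Real.log z⁻¹ z := Real.hasDerivAt_log hz0.ne'
      have h3 : HasDerivAt (fun x : ℝ => P.eval (Real.log x))
          (P.derivative.eval (Real.log z) * z⁻¹) z := h1.comp z h2
      have h4 : HasDerivAt g
          (1 * P.eval (Real.log z) + z * (P.derivative.eval (Real.log z) * z⁻¹)) z :=
        (hasDerivAt_id z).mul h3
      have h5 : 1 * P.eval (Real.log z) + z * (P.derivative.eval (Real.log z) * z⁻¹)
          = P.eval (Real.log z) + P.derivative.eval (Real.log z) := by
        field_simp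
      rw [h5] at h4
      exact h4.hasDerivWithinAt
    · intro z hz
      have hb1 := poly_bound P 4 hPdeg (Real.log z)
      have hb2 := poly_bound P.derivative 4 hP'deg (Real.log z)
      have hb3 := hlogb z hz.1 hz.2
      have hp4 : (0:ℝ) ≤ (1 + |Real.log z|) ^ 4 := by positivity
      rw [Real.norm_eq_abs]
      calc |P.eval (Real.log z) + P.derivative.eval (Real.log z)|
          ≤ |P.eval (Real.log z)| + |P.derivative.eval (Real.log z)| := abs_add_le _ _
        _ ≤ c * (1 + |Real.log z|) ^ 4 + c' * (1 + |Real.log z|) ^ 4 := by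
            exact add_le_add hb1 hb2
        _ = (c + c') * (1 + |Real.log z|) ^ 4 := by ring
        _ ≤ (c + c') * (81 * L ^ 4) := by
            apply mul_le_mul_of_nonneg_left hb3 (by linarith)
        _ = D := by rw [hD_def]; ring
  -- F bounds
  set F : ℝ → ℝ := fun T => ∫ u in (0:ℝ)..T, ‖riemannZeta (1/2 + Complex.I * u)‖ ^ 4
    with hF_def
  have hint : ∀ x y : ℝ, IntervalIntegrable
      (fun u : ℝ => ‖riemannZeta (1/2 + Complex.I * u)‖ ^ 4) volume x y :=
    fun x y => (zeta_line_cont.pow 4).intervalIntegrable x y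
  have hFbound : ∀ T : ℝ, 2 ≤ T →
      F T ≤ g T + C₀ * T ^ (1 - κ) ∧ g T - C₀ * T ^ (1 - κ) ≤ F T := by
    intro T hT
    have hT0 : (0:ℝ) < T := by linarith
    have h := abs_le.mp (hmom T hT)
    have hpow : T * T ^ (-κ) = T ^ (1 - κ) := by
      rw [show (1 - κ) = 1 + (-κ) by ring, Real.rpow_add hT0, Real.rpow_one]
    have hFT : F T = T * ((1/T) * F T) := by field_simp
    constructor
    · have := h.2
      calc F T = T * ((1/T) * F T) := hFT
        _ ≤ T * (P.eval (Real.log T) + C₀ * T ^ (-κ)) := by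
            apply mul_le_mul_of_nonneg_left (by linarith) hT0.le
        _ = g T + C₀ * (T * T ^ (-κ)) := by rw [hg_def]; ring
        _ = g T + C₀ * T ^ (1 - κ) := by rw [hpow]
    · have := h.1
      calc g T - C₀ * T ^ (1 - κ) = T * (P.eval (Real.log T) - C₀ * T ^ (-κ)) := by
            rw [hg_def, ← hpow]; ring
        _ ≤ T * ((1/T) * F T) := by
            apply mul_le_mul_of_nonneg_left (by linarith) hT0.le
        _ = F T := hFT.symm
  have hsplit : (∫ u in a..b, ‖riemannZeta (1/2 + Complex.I * u)‖ ^ 4) = F b - F a := by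
    rw [hF_def]
    exact (integral_interval_sub_left (hint 0 b) (hint 0 a)).symm
  have hbpow0 : (0:ℝ) ≤ b ^ (1 - κ) := Real.rpow_nonneg (by linarith) _
  have hbpow1 : (1:ℝ) ≤ b ^ (1 - κ) := Real.one_le_rpow (by linarith) (by linarith)
  have hFb := hFbound b hb2
  have hba : (0:ℝ) ≤ b - a := by linarith
  rw [hsplit]
  rcases le_or_gt 2 a with ha2le | ha2
  · -- case 2 ≤ a
    have hFa := hFbound a ha2le
    have hmv := hmvt a ⟨ha2le, by linarith⟩ b ⟨hb2, hbt⟩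
    rw [Real.norm_eq_abs, Real.norm_eq_abs] at hmv
    have h1 : g b - g a ≤ D * (b - a) := by
      have := le_abs_self (g b - g a)
      rw [abs_of_nonneg hba] at hmv
      linarith
    have hapow : a ^ (1 - κ) ≤ b ^ (1 - κ) :=
      Real.rpow_le_rpow (by linarith) hab (by linarith)
    have key : F b - F a ≤ D * (b - a) + 2 * C₀ * b ^ (1 - κ) := by
      have h2 := hFa.2
      have h3 := hFb.1
      nlinarith [mul_le_mul_of_nonneg_left hapow hC₀.le]
    have hKD : D ≤ 200 * (c + c' + C₀ + 1) * L ^ 4 := by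
      rw [hD_def]
      apply mul_le_mul_of_nonneg_right (by linarith) (by positivity)
    have hKC : 2 * C₀ ≤ 200 * (c + c' + C₀ + 1) * L ^ 4 := by
      nlinarith [mul_le_mul_of_nonneg_left hL4 (show (0:ℝ) ≤ 200 * (c + c' + C₀ + 1) by linarith)]
    calc F b - F a ≤ D * (b - a) + 2 * C₀ * b ^ (1 - κ) := key
      _ ≤ (200 * (c + c' + C₀ + 1) * L ^ 4) * (b - a) +
          (200 * (c + c' + C₀ + 1) * L ^ 4) * b ^ (1 - κ) :=
        add_le_add (mul_le_mul_of_nonneg_right hKD hba)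
          (mul_le_mul_of_nonneg_right hKC hbpow0)
      _ = 200 * (c + c' + C₀ + 1) * L ^ 4 * ((b - a) + b ^ (1 - κ)) := by ring
  · -- case a < 2
    have hFa0 : 0 ≤ F a := intervalIntegral.integral_nonneg ha (fun u _ => by positivity)
    have hmv := hmvt 2 ⟨le_refl 2, by linarith⟩ b ⟨hb2, hbt⟩
    rw [Real.norm_eq_abs, Real.norm_eq_abs] at hmv
    have h1 : g b - g 2 ≤ D * (b - 2) := by
      have := le_abs_self (g b - g 2)
      rw [abs_of_nonneg (by linarith : (0:ℝ) ≤ b - 2)] at hmv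
      linarith
    have hg2 : g 2 ≤ 32 * c := by
      have hb1 := poly_bound P 4 hPdeg (Real.log 2)
      have hl2 : |Real.log 2| ≤ 1 := by
        rw [abs_of_nonneg (Real.log_nonneg (by norm_num))]
        have := Real.log_two_lt_d9; linarith
      have h2 : (1 + |Real.log 2|) ^ 4 ≤ 16 := by
        calc (1 + |Real.log 2|) ^ 4 ≤ 2 ^ 4 :=
              pow_le_pow_left₀ (by positivity) (by linarith) 4
          _ = 16 := by norm_num
      have h3 : |P.eval (Real.log 2)| ≤ 16 * c := by nlinarith
      have h4 := le_abs_self (P.eval (Real.log 2))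
      rw [hg_def]
      show (2:ℝ) * P.eval (Real.log 2) ≤ 32 * c
      linarith
    have hb2' : b - 2 ≤ b - a := by linarith
    have hKD : D ≤ 200 * (c + c' + C₀ + 1) * L ^ 4 := by
      rw [hD_def]
      apply mul_le_mul_of_nonneg_right (by linarith) (by positivity)
    have hKC2 : 32 * c + C₀ ≤ 200 * (c + c' + C₀ + 1) * L ^ 4 := by
      nlinarith [mul_le_mul_of_nonneg_left hL4 (show (0:ℝ) ≤ 200 * (c + c' + C₀ + 1) by linarith)]
    calc F b - F a ≤ g b + C₀ * b ^ (1 - κ) := by have := hFb.1; linarith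
      _ ≤ 32 * c + D * (b - a) + C₀ * b ^ (1 - κ) := by nlinarith
      _ ≤ (32 * c + C₀) * b ^ (1 - κ) + D * (b - a) := by
          nlinarith [mul_nonneg (by linarith : (0:ℝ) ≤ 32 * c)
            (by linarith : (0:ℝ) ≤ b ^ (1 - κ) - 1)]
      _ ≤ (200 * (c + c' + C₀ + 1) * L ^ 4) * b ^ (1 - κ) +
          (200 * (c + c' + C₀ + 1) * L ^ 4) * (b - a) :=
        add_le_add (mul_le_mul_of_nonneg_right hKC2 hbpow0)
          (mul_le_mul_of_nonneg_right hKD hba)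
      _ = 200 * (c + c' + C₀ + 1) * L ^ 4 * ((b - a) + b ^ (1 - κ)) := by ring

set_option maxHeartbeats 2000000 in
theorem stmt7 (κ : ℝ) (hκ : κ ∈ Set.Ioo (0:ℝ) 1) (P : Polynomial ℝ) (hP : P.degree = 4)
    (C₀ : ℝ) (hC₀ : 0 < C₀)
    (hmom : ∀ T : ℝ, 2 ≤ T →
      |(1 / T) * (∫ u in (0:ℝ)..T, ‖riemannZeta (1/2 + Complex.I * u)‖ ^ 4) -
          P.eval (Real.log T)| ≤ C₀ * T ^ (-κ)) :
    ∃ C > (0:ℝ), ∀ t : ℝ, 10 ≤ t → ∀ A : ℝ, 1 ≤ A → A ≤ t →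
      (∫ r in A..(2 * A),
          ‖riemannZeta (1/2 + Complex.I * (2 * t - r))‖ ^ 2 *
            ‖riemannZeta (1/2 + Complex.I * r)‖ ^ 2) ≤
        C * (Real.log t) ^ 4 * (A + t ^ ((1 - κ) / 2) * Real.sqrt A) := by
  obtain ⟨hκ0, hκ1⟩ := hκ
  have hc : 0 ≤ ∑ i ∈ Finset.range 5, |P.coeff i| :=
    Finset.sum_nonneg fun i _ => abs_nonneg _
  have hc' : 0 ≤ ∑ i ∈ Finset.range 5, |P.derivative.coeff i| :=
    Finset.sum_nonneg fun i _ => abs_nonneg _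
  set K := 200 * ((∑ i ∈ Finset.range 5, |P.coeff i|) +
    (∑ i ∈ Finset.range 5, |P.derivative.coeff i|) + C₀ + 1) with hK_def
  have hK0 : 0 < K := by rw [hK_def]; linarith
  refine ⟨4 * K, by linarith, ?_⟩
  intro t ht A hA1 hAt
  have ht0 : (0:ℝ) < t := by linarith
  have hA0 : (0:ℝ) < A := by linarith
  set L := Real.log t with hL_def
  have hL1 : 1 ≤ L := by
    rw [hL_def, Real.le_log_iff_exp_le (by linarith)]
    have := Real.exp_one_lt_d9
    linarith
  have htpow : (0:ℝ) < t ^ (1 - κ) := Real.rpow_pos_of_pos ht0 _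
  set G : ℝ → ℝ := fun u => ‖riemannZeta (1/2 + Complex.I * (u:ℂ))‖ with hG_def
  have hGc : Continuous G := zeta_line_cont
  have hGc2 : Continuous fun r : ℝ => G (2*t - r) :=
    hGc.comp (continuous_const.sub continuous_id)
  have hG0 : ∀ u, 0 ≤ G u := fun u => norm_nonneg _
  -- the sqrt quantities
  set S := Real.sqrt A with hS_def
  set W := Real.sqrt (A + 2 * t ^ (1 - κ)) with hW_def
  have hS0 : 0 < S := Real.sqrt_pos.mpr hA0
  have hW0 : 0 < W := Real.sqrt_pos.mpr (by positivity)
  have hS2 : S ^ 2 = A := Real.sq_sqrt hA0.le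
  have hW2 : W ^ 2 = A + 2 * t ^ (1 - κ) := Real.sq_sqrt (by positivity)
  set lam := S / W with hlam_def
  have hlam0 : 0 < lam := div_pos hS0 hW0
  -- rewrite the integrand via G
  have hIeq : (∫ r in A..(2 * A),
      ‖riemannZeta (1/2 + Complex.I * (2 * t - r))‖ ^ 2 *
        ‖riemannZeta (1/2 + Complex.I * r)‖ ^ 2)
      = ∫ r in A..(2 * A), G (2*t - r) ^ 2 * G r ^ 2 := by
    apply intervalIntegral.integral_congr
    intro r _
    simp only [hG_def]
    push_cast
    ring_nf
  rw [hIeq]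
  -- pointwise AM-GM
  have hpt : ∀ r ∈ Set.Icc A (2*A),
      G (2*t - r) ^ 2 * G r ^ 2 ≤
        lam/2 * G (2*t - r) ^ 4 + (1/(2*lam)) * G r ^ 4 := by
    intro r _
    set x := G (2*t - r) with hx_def
    set y := G r with hy_def
    have h : 0 ≤ (lam * x^2 - y^2)^2 := sq_nonneg _
    have h2 : 2*lam*(x^2*y^2) ≤ lam^2*x^4 + y^4 := by nlinarith
    calc x^2*y^2 = (2*lam*(x^2*y^2))/(2*lam) := by field_simp
      _ ≤ (lam^2*x^4 + y^4)/(2*lam) := by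
          apply div_le_div_of_nonneg_right h2 (by positivity) |>.trans_eq rfl
      _ = lam/2 * x^4 + (1/(2*lam)) * y^4 := by field_simp
  have hint1 : IntervalIntegrable (fun r => G (2*t - r) ^ 2 * G r ^ 2) volume A (2*A) :=
    ((hGc2.pow 2).mul (hGc.pow 2)).intervalIntegrable _ _
  have hint2 : IntervalIntegrable (fun r => lam/2 * G (2*t - r) ^ 4 + (1/(2*lam)) * G r ^ 4)
      volume A (2*A) :=
    ((continuous_const.mul (hGc2.pow 4)).add
      (continuous_const.mul (hGc.pow 4))).intervalIntegrable _ _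
  have hstep1 : (∫ r in A..(2*A), G (2*t - r) ^ 2 * G r ^ 2)
      ≤ ∫ r in A..(2*A), (lam/2 * G (2*t - r) ^ 4 + (1/(2*lam)) * G r ^ 4) :=
    intervalIntegral.integral_mono_on (by linarith) hint1 hint2 hpt
  have hstep2 : (∫ r in A..(2*A), (lam/2 * G (2*t - r) ^ 4 + (1/(2*lam)) * G r ^ 4))
      = lam/2 * (∫ r in A..(2*A), G (2*t - r) ^ 4)
        + (1/(2*lam)) * (∫ r in A..(2*A), G r ^ 4) := by
    rw [intervalIntegral.integral_add (f := fun r => lam/2 * G (2*t - r) ^ 4) (g := fun r => (1/(2*lam)) * G r ^ 4)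
      ((continuous_const.mul (hGc2.pow 4)).intervalIntegrable _ _)
      ((continuous_const.mul (hGc.pow 4)).intervalIntegrable _ _),
      intervalIntegral.integral_const_mul, intervalIntegral.integral_const_mul]
  -- bound I₁
  have hsub : (∫ r in A..(2*A), G (2*t - r) ^ 4)
      = ∫ u in (2*t - 2*A)..(2*t - A), G u ^ 4 :=
    intervalIntegral.integral_comp_sub_left (a := A) (b := 2*A) (fun u => G u ^ 4) (2*t)
  have hB1 : (∫ r in A..(2*A), G (2*t - r) ^ 4) ≤ K * L^4 * (A + 2 * t ^ (1-κ)) := by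
    rw [hsub]
    have h := key_moment κ ⟨hκ0, hκ1⟩ P hP C₀ hC₀ hmom t ht (2*t - 2*A) (2*t - A)
      (by linarith) (by linarith) (by linarith) (by linarith)
    rw [show 2*t - A - (2*t - 2*A) = A by ring] at h
    have h2 : (2*t - A) ^ (1-κ) ≤ 2 * t ^ (1-κ) := by
      calc (2*t - A) ^ (1-κ) ≤ (2*t) ^ (1-κ) :=
            Real.rpow_le_rpow (by linarith) (by linarith) (by linarith)
        _ = 2 ^ (1-κ) * t ^ (1-κ) := Real.mul_rpow (by norm_num) ht0.le
        _ ≤ 2 * t ^ (1-κ) := by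
            apply mul_le_mul_of_nonneg_right _ htpow.le
            calc (2:ℝ) ^ (1-κ) ≤ 2 ^ (1:ℝ) :=
                  Real.rpow_le_rpow_of_exponent_le one_le_two (by linarith)
              _ = 2 := Real.rpow_one 2
    calc (∫ u in (2*t - 2*A)..(2*t - A), G u ^ 4)
        ≤ K * L^4 * (A + (2*t - A) ^ (1-κ)) := h
      _ ≤ K * L^4 * (A + 2 * t ^ (1-κ)) := by
          apply mul_le_mul_of_nonneg_left (by linarith) (by positivity)
  -- bound I₂
  have hB2 : (∫ r in A..(2*A), G r ^ 4) ≤ K * L^4 * (3*A) := by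
    have h := key_moment κ ⟨hκ0, hκ1⟩ P hP C₀ hC₀ hmom t ht A (2*A)
      (by linarith) (by linarith) (by linarith) (by linarith)
    rw [show 2*A - A = A by ring] at h
    have h2 : (2*A) ^ (1-κ) ≤ 2*A := by
      calc (2*A) ^ (1-κ) ≤ (2*A) ^ (1:ℝ) :=
            Real.rpow_le_rpow_of_exponent_le (by linarith) (by linarith)
        _ = 2*A := Real.rpow_one _
    calc (∫ r in A..(2*A), G r ^ 4) ≤ K * L^4 * (A + (2*A) ^ (1-κ)) := h
      _ ≤ K * L^4 * (3*A) := by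
          apply mul_le_mul_of_nonneg_left (by linarith) (by positivity)
  -- nonnegativity of the integrals
  have hI1nn : 0 ≤ ∫ r in A..(2*A), G (2*t - r) ^ 4 :=
    intervalIntegral.integral_nonneg (by linarith) (fun u _ => by positivity)
  have hI2nn : 0 ≤ ∫ r in A..(2*A), G r ^ 4 :=
    intervalIntegral.integral_nonneg (by linarith) (fun u _ => by positivity)
  -- combine
  have hcomb : (∫ r in A..(2*A), G (2*t - r) ^ 2 * G r ^ 2)
      ≤ lam/2 * (K * L^4 * (A + 2 * t ^ (1-κ))) + (1/(2*lam)) * (K * L^4 * (3*A)) := by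
    rw [hstep2] at hstep1
    have e1 : lam/2 * (∫ r in A..(2*A), G (2*t - r) ^ 4)
        ≤ lam/2 * (K * L^4 * (A + 2 * t ^ (1-κ))) :=
      mul_le_mul_of_nonneg_left hB1 (by positivity)
    have e2 : (1/(2*lam)) * (∫ r in A..(2*A), G r ^ 4)
        ≤ (1/(2*lam)) * (K * L^4 * (3*A)) :=
      mul_le_mul_of_nonneg_left hB2 (by positivity)
    linarith
  -- compute the RHS in terms of S, W
  have hrhs : lam/2 * (K * L^4 * (A + 2 * t ^ (1-κ))) + (1/(2*lam)) * (K * L^4 * (3*A))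
      = 2 * (K * L^4) * (S * W) := by
    rw [← hW2, ← hS2, hlam_def]
    field_simp
    ring
  rw [hrhs] at hcomb
  -- bound S * W
  have hsq2 : Real.sqrt 2 ≤ 2 := by
    have h1 : Real.sqrt 2 ≤ Real.sqrt 4 := Real.sqrt_le_sqrt (by norm_num)
    have h2 : Real.sqrt 4 = 2 := by
      rw [show (4:ℝ) = 2^2 by norm_num, Real.sqrt_sq (by norm_num : (0:ℝ) ≤ 2)]
    linarith
  have h3 : Real.sqrt (t ^ (1-κ)) = t ^ ((1-κ)/2) := by
    rw [Real.sqrt_eq_rpow, ← Real.rpow_mul ht0.le]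
    congr 1
    ring
  have htp2 : (0:ℝ) ≤ t ^ ((1-κ)/2) := Real.rpow_nonneg ht0.le _
  have hWle : W ≤ S + 2 * t ^ ((1-κ)/2) := by
    have h1 := sqrt_add_le' A (2 * t ^ (1-κ)) hA0.le (by positivity)
    have h2 : Real.sqrt (2 * t ^ (1-κ)) = Real.sqrt 2 * Real.sqrt (t ^ (1-κ)) :=
      Real.sqrt_mul (by norm_num) _
    rw [h2, h3] at h1
    have h4 : Real.sqrt 2 * t ^ ((1-κ)/2) ≤ 2 * t ^ ((1-κ)/2) :=
      mul_le_mul_of_nonneg_right hsq2 htp2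
    rw [hW_def]
    rw [hS_def] at *
    linarith
  have hSW : S * W ≤ A + 2 * (t ^ ((1-κ)/2) * S) := by
    calc S * W ≤ S * (S + 2 * t ^ ((1-κ)/2)) := mul_le_mul_of_nonneg_left hWle hS0.le
      _ = S^2 + 2 * (t ^ ((1-κ)/2) * S) := by ring
      _ = A + 2 * (t ^ ((1-κ)/2) * S) := by rw [hS2]
  calc (∫ r in A..(2*A), G (2*t - r) ^ 2 * G r ^ 2) ≤ 2 * (K * L^4) * (S * W) := hcomb
    _ ≤ 2 * (K * L^4) * (A + 2 * (t ^ ((1-κ)/2) * S)) :=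
        mul_le_mul_of_nonneg_left hSW (by positivity)
    _ ≤ 4 * K * L^4 * (A + t ^ ((1-κ)/2) * S) := by nlinarith [mul_nonneg htp2 hS0.le, mul_nonneg hK0.le (by positivity : (0:ℝ) ≤ L^4)]
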